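/- arXiv:2310.02611 — 2 statements merged into one kernel-verified Lean document; each statement's English description precedes it below -/
import Mathlib

section
/- Assume g₁ : ℝ → ℝ is convex and non-decreasing and g₂ : ℝ → ℝ is strictly convex. Then the semi-dual functional L is convex on C(Y): for all v₁, v₂ ∈ C(Y) and t ∈ (0,1), L(t v₁ + (1−t) v₂) ≤ t L(v₁) + (1−t) L(v₂); moreover the inequality is strict whenever ν({ y ∈ Y : v₁(y) ≠ v₂(y) }) > 0. -/
open MeasureTheory Filter
open scoped ENNReal NNReal Topology

noncomputable section

/-- The quadratic transport cost `c(x,y) = τ‖x-y‖₂²`. -/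
def cost {d : ℕ} (τ : ℝ) (x y : EuclideanSpace ℝ (Fin d)) : ℝ := τ * ‖x - y‖ ^ 2

/-- The `c`-transform `v^c(x) = inf_{y ∈ Y} (c(x,y) - v(y))`. -/
def ctransform {d : ℕ} (τ : ℝ) (Y : Set (EuclideanSpace ℝ (Fin d)))
    (v : EuclideanSpace ℝ (Fin d) → ℝ) (x : EuclideanSpace ℝ (Fin d)) : ℝ :=
  sInf ((fun y => cost τ x y - v y) '' Y)

/-- The semi-dual functional
`L(v) = ∫_X g₁(-v^c(x)) dμ(x) + ∫_Y g₂(-v(y)) dν(y)`. -/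
def semidual {d : ℕ} (τ : ℝ) (X Y : Set (EuclideanSpace ℝ (Fin d)))
    (μ ν : Measure (EuclideanSpace ℝ (Fin d))) (g₁ g₂ : ℝ → ℝ)
    (v : EuclideanSpace ℝ (Fin d) → ℝ) : ℝ :=
  (∫ x in X, g₁ (-(ctransform τ Y v x)) ∂μ) + ∫ y in Y, g₂ (-(v y)) ∂ν

lemma cost_nonneg {d : ℕ} {τ : ℝ} (hτ : 0 ≤ τ) (x y : EuclideanSpace ℝ (Fin d)) :
    0 ≤ cost τ x y := mul_nonneg hτ (sq_nonneg _)

lemma ct_bddBelow {d : ℕ} {τ : ℝ} (hτ : 0 ≤ τ) {Y : Set (EuclideanSpace ℝ (Fin d))}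
    {v : EuclideanSpace ℝ (Fin d) → ℝ} {C : ℝ} (hv : ∀ y ∈ Y, ‖v y‖ ≤ C)
    (x : EuclideanSpace ℝ (Fin d)) :
    BddBelow ((fun y => cost τ x y - v y) '' Y) := by
  refine ⟨-C, ?_⟩
  rintro z ⟨y, hy, rfl⟩
  have h1 : |v y| ≤ C := by simpa using hv y hy
  have h2 := cost_nonneg hτ x y
  have h3 := (abs_le.1 h1).2
  simp only
  linarith

lemma ct_onesided {d : ℕ} {τ : ℝ} (hτ : 0 ≤ τ) {Y : Set (EuclideanSpace ℝ (Fin d))}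
    (hYne : Y.Nonempty) {v : EuclideanSpace ℝ (Fin d) → ℝ} {C : ℝ}
    (hv : ∀ y ∈ Y, ‖v y‖ ≤ C) {R : ℝ} (hR : ∀ y ∈ Y, ‖y‖ ≤ R)
    (x x' : EuclideanSpace ℝ (Fin d)) :
    ctransform τ Y v x ≤ ctransform τ Y v x' +
      τ * (‖x - x'‖ + 2 * (‖x'‖ + R)) * ‖x - x'‖ := by
  set K := τ * (‖x - x'‖ + 2 * (‖x'‖ + R)) * ‖x - x'‖ with hK
  have hmain : ctransform τ Y v x - K ≤ ctransform τ Y v x' := by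
    apply le_csInf (hYne.image _)
    rintro z ⟨y, hy, rfl⟩
    have h1 : ctransform τ Y v x ≤ cost τ x y - v y :=
      csInf_le (ct_bddBelow hτ hv x) ⟨y, hy, rfl⟩
    have h2 : cost τ x y ≤ cost τ x' y + K := by
      have hxy : ‖x - y‖ ≤ ‖x - x'‖ + ‖x' - y‖ := norm_sub_le_norm_sub_add_norm_sub x x' y
      have hy' : ‖x' - y‖ ≤ ‖x'‖ + R := by
        have := hR y hy
        calc ‖x' - y‖ ≤ ‖x'‖ + ‖y‖ := norm_sub_le _ _
          _ ≤ ‖x'‖ + R := by linarith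
      have base : ‖x - y‖ ^ 2 ≤ ‖x' - y‖ ^ 2 + (‖x - x'‖ + 2 * (‖x'‖ + R)) * ‖x - x'‖ := by
        nlinarith [norm_nonneg (x - y), norm_nonneg (x' - y), norm_nonneg (x - x')]
      have := mul_le_mul_of_nonneg_left base hτ
      simp only [cost, hK]
      nlinarith
    simp only
    linarith
  linarith

lemma ct_continuous {d : ℕ} {τ : ℝ} (hτ : 0 ≤ τ) {Y : Set (EuclideanSpace ℝ (Fin d))}
    (hYc : IsCompact Y) (hYne : Y.Nonempty) {v : EuclideanSpace ℝ (Fin d) → ℝ} {C : ℝ}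
    (hv : ∀ y ∈ Y, ‖v y‖ ≤ C) : Continuous (ctransform τ Y v) := by
  obtain ⟨R, hR⟩ := isBounded_iff_forall_norm_le.1 hYc.isBounded
  have hRnn : 0 ≤ R := le_trans (norm_nonneg _) (hR _ hYne.choose_spec)
  rw [continuous_iff_continuousAt]
  intro x₀
  have key : ∀ x, |ctransform τ Y v x - ctransform τ Y v x₀| ≤
      τ * (‖x - x₀‖ + 2 * (‖x‖ + ‖x₀‖ + R)) * ‖x - x₀‖ := by
    intro x
    have h1 := ct_onesided hτ hYne hv hR x x₀
    have h2 := ct_onesided hτ hYne hv hR x₀ x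
    rw [norm_sub_rev x₀ x] at h2
    rw [abs_sub_le_iff]
    constructor
    · nlinarith [mul_nonneg (mul_nonneg hτ (norm_nonneg x)) (norm_nonneg (x - x₀))]
    · nlinarith [mul_nonneg (mul_nonneg hτ (norm_nonneg x₀)) (norm_nonneg (x - x₀))]
  have hD : Tendsto (fun x => τ * (‖x - x₀‖ + 2 * (‖x‖ + ‖x₀‖ + R)) * ‖x - x₀‖)
      (𝓝 x₀) (𝓝 0) := by
    have hc : Continuous fun x : EuclideanSpace ℝ (Fin d) =>
        τ * (‖x - x₀‖ + 2 * (‖x‖ + ‖x₀‖ + R)) * ‖x - x₀‖ := by fun_prop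
    have h0 := hc.tendsto x₀
    simpa using h0
  have htend : Tendsto (fun x => ctransform τ Y v x - ctransform τ Y v x₀)
      (𝓝 x₀) (𝓝 0) :=
    squeeze_zero_norm (fun x => by simpa using key x) hD
  have := htend.add_const (ctransform τ Y v x₀)
  simpa [ContinuousAt] using this

/-- If `g₁` is convex and non-decreasing and `g₂` is strictly convex,
then the semi-dual functional `L` is convex on `C(Y)`, and strictly convex along pairs
`v₁, v₂` that differ on a set of positive `ν`-measure. -/
theorem semidual_convex
    {d : ℕ} (τ : ℝ) (hτ : 0 < τ)
    (X Y : Set (EuclideanSpace ℝ (Fin d))) (hX : IsCompact X) (hY : IsCompact Y)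
    (μ ν : Measure (EuclideanSpace ℝ (Fin d)))
    [IsProbabilityMeasure μ] [IsProbabilityMeasure ν]
    (hμX : μ Xᶜ = 0) (hνY : ν Yᶜ = 0)
    (g₁ g₂ : ℝ → ℝ)
    (hg₁conv : ConvexOn ℝ Set.univ g₁) (hg₁mono : Monotone g₁)
    (hg₂conv : StrictConvexOn ℝ Set.univ g₂)
    (v₁ v₂ : EuclideanSpace ℝ (Fin d) → ℝ) (hv₁ : ContinuousOn v₁ Y) (hv₂ : ContinuousOn v₂ Y)
    (t : ℝ) (ht₀ : 0 < t) (ht₁ : t < 1) :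
    semidual τ X Y μ ν g₁ g₂ (fun y => t * v₁ y + (1 - t) * v₂ y) ≤
        t * semidual τ X Y μ ν g₁ g₂ v₁ + (1 - t) * semidual τ X Y μ ν g₁ g₂ v₂ ∧
      (0 < ν {y ∈ Y | v₁ y ≠ v₂ y} →
        semidual τ X Y μ ν g₁ g₂ (fun y => t * v₁ y + (1 - t) * v₂ y) <
          t * semidual τ X Y μ ν g₁ g₂ v₁ + (1 - t) * semidual τ X Y μ ν g₁ g₂ v₂) := by
  classical
  have ht1' : 0 < 1 - t := by linarith
  set w : EuclideanSpace ℝ (Fin d) → ℝ := fun y => t * v₁ y + (1 - t) * v₂ y with hwdef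
  have hYne : Y.Nonempty := by
    rcases Y.eq_empty_or_nonempty with h | h
    · rw [h, Set.compl_empty, measure_univ] at hνY
      exact absurd hνY one_ne_zero
    · exact h
  obtain ⟨C₁, hC₁⟩ := hY.exists_bound_of_continuousOn hv₁
  obtain ⟨C₂, hC₂⟩ := hY.exists_bound_of_continuousOn hv₂
  have hw : ContinuousOn w Y := (continuousOn_const.mul hv₁).add (continuousOn_const.mul hv₂)
  obtain ⟨Cw, hCw⟩ := hY.exists_bound_of_continuousOn hw
  -- continuity of the c-transforms
  have hct₁ : Continuous (ctransform τ Y v₁) := ct_continuous hτ.le hY hYne hC₁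
  have hct₂ : Continuous (ctransform τ Y v₂) := ct_continuous hτ.le hY hYne hC₂
  have hctw : Continuous (ctransform τ Y w) := ct_continuous hτ.le hY hYne hCw
  -- continuity of g₁, g₂
  have hg₁cont : Continuous g₁ := by
    have := hg₁conv.continuousOn isOpen_univ
    rwa [continuousOn_univ] at this
  have hg₂cont : Continuous g₂ := by
    have := hg₂conv.convexOn.continuousOn isOpen_univ
    rwa [continuousOn_univ] at this
  -- integrability
  have int1 : IntegrableOn (fun x => g₁ (-(ctransform τ Y v₁ x))) X μ :=
    ((hg₁cont.comp hct₁.neg).continuousOn).integrableOn_compact hX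
  have int2 : IntegrableOn (fun x => g₁ (-(ctransform τ Y v₂ x))) X μ :=
    ((hg₁cont.comp hct₂.neg).continuousOn).integrableOn_compact hX
  have intw : IntegrableOn (fun x => g₁ (-(ctransform τ Y w x))) X μ :=
    ((hg₁cont.comp hctw.neg).continuousOn).integrableOn_compact hX
  have intν1 : IntegrableOn (fun y => g₂ (-(v₁ y))) Y ν :=
    (hg₂cont.comp_continuousOn hv₁.neg).integrableOn_compact hY
  have intν2 : IntegrableOn (fun y => g₂ (-(v₂ y))) Y ν :=
    (hg₂cont.comp_continuousOn hv₂.neg).integrableOn_compact hY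
  have intνw : IntegrableOn (fun y => g₂ (-(w y))) Y ν :=
    (hg₂cont.comp_continuousOn hw.neg).integrableOn_compact hY
  -- pointwise inequality on the μ side
  have hμpt : ∀ x, g₁ (-(ctransform τ Y w x)) ≤
      t * g₁ (-(ctransform τ Y v₁ x)) + (1 - t) * g₁ (-(ctransform τ Y v₂ x)) := by
    intro x
    have key : t * ctransform τ Y v₁ x + (1 - t) * ctransform τ Y v₂ x ≤
        ctransform τ Y w x := by
      apply le_csInf (hYne.image _)
      rintro z ⟨y, hy, rfl⟩
      have h1 : ctransform τ Y v₁ x ≤ cost τ x y - v₁ y :=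
        csInf_le (ct_bddBelow hτ.le hC₁ x) ⟨y, hy, rfl⟩
      have h2 : ctransform τ Y v₂ x ≤ cost τ x y - v₂ y :=
        csInf_le (ct_bddBelow hτ.le hC₂ x) ⟨y, hy, rfl⟩
      simp only [hwdef]
      nlinarith
    have h3 : g₁ (-(ctransform τ Y w x)) ≤
        g₁ (t * (-(ctransform τ Y v₁ x)) + (1 - t) * (-(ctransform τ Y v₂ x))) :=
      hg₁mono (by linarith)
    have h4 := hg₁conv.2 (Set.mem_univ (-(ctransform τ Y v₁ x)))
      (Set.mem_univ (-(ctransform τ Y v₂ x))) ht₀.le ht1'.le (by ring)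
    simp only [smul_eq_mul] at h4
    linarith
  -- pointwise inequality on the ν side
  have hνpt : ∀ y, g₂ (-(w y)) ≤ t * g₂ (-(v₁ y)) + (1 - t) * g₂ (-(v₂ y)) := by
    intro y
    have e : -(w y) = t * (-(v₁ y)) + (1 - t) * (-(v₂ y)) := by simp [hwdef]; ring
    rw [e]
    have h4 := hg₂conv.convexOn.2 (Set.mem_univ (-(v₁ y))) (Set.mem_univ (-(v₂ y)))
      ht₀.le ht1'.le (by ring)
    simpa [smul_eq_mul] using h4
  have hνptlt : ∀ y, v₁ y ≠ v₂ y →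
      g₂ (-(w y)) < t * g₂ (-(v₁ y)) + (1 - t) * g₂ (-(v₂ y)) := by
    intro y hne
    have e : -(w y) = t * (-(v₁ y)) + (1 - t) * (-(v₂ y)) := by simp [hwdef]; ring
    rw [e]
    have hne' : (-(v₁ y)) ≠ (-(v₂ y)) := fun h => hne (neg_injective h)
    have h4 := hg₂conv.2 (Set.mem_univ (-(v₁ y))) (Set.mem_univ (-(v₂ y)))
      hne' ht₀ ht1' (by ring)
    simpa [smul_eq_mul] using h4
  -- integral inequality on μ side
  have hμint : (∫ x in X, g₁ (-(ctransform τ Y w x)) ∂μ) ≤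
      t * (∫ x in X, g₁ (-(ctransform τ Y v₁ x)) ∂μ) +
        (1 - t) * (∫ x in X, g₁ (-(ctransform τ Y v₂ x)) ∂μ) := by
    have hle := integral_mono intw ((int1.const_mul t).add (int2.const_mul (1 - t)))
      (fun x => hμpt x)
    simp only [Pi.add_apply] at hle
    rwa [integral_add (int1.const_mul t) (int2.const_mul (1 - t)),
      integral_const_mul, integral_const_mul] at hle
  -- integral inequality on ν side
  have hsplit : (∫ y in Y, (t * g₂ (-(v₁ y)) + (1 - t) * g₂ (-(v₂ y))) ∂ν) =
      t * (∫ y in Y, g₂ (-(v₁ y)) ∂ν) + (1 - t) * (∫ y in Y, g₂ (-(v₂ y)) ∂ν) := by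
    rw [integral_add (intν1.const_mul t) (intν2.const_mul (1 - t)),
      integral_const_mul, integral_const_mul]
  have hνint : (∫ y in Y, g₂ (-(w y)) ∂ν) ≤
      t * (∫ y in Y, g₂ (-(v₁ y)) ∂ν) + (1 - t) * (∫ y in Y, g₂ (-(v₂ y)) ∂ν) := by
    have hle := integral_mono intνw ((intν1.const_mul t).add (intν2.const_mul (1 - t)))
      (fun y => hνpt y)
    simp only [Pi.add_apply] at hle
    rwa [hsplit] at hle
  constructor
  · simp only [semidual]
    linarith
  · intro hpos
    set h : EuclideanSpace ℝ (Fin d) → ℝ :=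
      fun y => t * g₂ (-(v₁ y)) + (1 - t) * g₂ (-(v₂ y)) - g₂ (-(w y)) with hhdef
    have hintc : Integrable (fun y => t * g₂ (-(v₁ y)) + (1 - t) * g₂ (-(v₂ y)))
        (ν.restrict Y) := (intν1.const_mul t).add (intν2.const_mul (1 - t))
    have inth : Integrable h (ν.restrict Y) := hintc.sub intνw
    have hnn : 0 ≤ h := fun y => sub_nonneg.2 (hνpt y)
    have hposint : 0 < ∫ y in Y, h y ∂ν := by
      rw [integral_pos_iff_support_of_nonneg hnn inth]
      have hsub : {y | v₁ y ≠ v₂ y} ⊆ Function.support h := by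
        intro y hy
        exact (sub_pos.2 (hνptlt y hy)).ne'
      calc (0 : ℝ≥0∞) < ν {y ∈ Y | v₁ y ≠ v₂ y} := hpos
        _ = (ν.restrict Y) {y | v₁ y ≠ v₂ y} := by
            rw [Measure.restrict_apply' hY.measurableSet]
            congr 1
            ext y
            simp only [Set.mem_setOf_eq, Set.mem_inter_iff, Set.mem_sep_iff]
            tauto
        _ ≤ (ν.restrict Y) (Function.support h) := measure_mono hsub
    have hsplit2 : (∫ y in Y, h y ∂ν) =
        (t * (∫ y in Y, g₂ (-(v₁ y)) ∂ν) + (1 - t) * (∫ y in Y, g₂ (-(v₂ y)) ∂ν)) -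
          ∫ y in Y, g₂ (-(w y)) ∂ν := by
      simp only [hhdef]
      rw [integral_sub hintc intνw, hsplit]
    have hνlt : (∫ y in Y, g₂ (-(w y)) ∂ν) <
        t * (∫ y in Y, g₂ (-(v₁ y)) ∂ν) + (1 - t) * (∫ y in Y, g₂ (-(v₂ y)) ∂ν) := by
      linarith [hposint, hsplit2.symm.le, hsplit2.le]
    simp only [semidual]
    linarith

end
end

section
/- Let Ψ₁, Ψ₂ be entropy functions and let α > 0. If π^α is a finite positive Borel measure on X×Y attaining C_ub^α(μ,ν), then its marginal discrepancies satisfy D_{Ψ₁}(π₀^α|μ) + D_{Ψ₂}(π₁^α|ν) ≤ C(μ,ν)/α = (1/α) inf_{π∈Π(μ,ν)} ∫ τ‖x−y‖₂² dπ(x,y). -/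
open MeasureTheory Filter
open scoped ENNReal NNReal Topology Classical

noncomputable section

/-- An entropy function `Ψ : ℝ → [0,∞]`: convex, lower semicontinuous, non-negative
(automatic from the codomain), `Ψ(x) = ∞` for `x < 0`, `Ψ(1) = 0`, and superlinear. -/
structure IsEntropy (Ψ : ℝ → ℝ≥0∞) : Prop where
  convex : ∀ x y : ℝ, ∀ t : ℝ, 0 ≤ t → t ≤ 1 →
    Ψ (t * x + (1 - t) * y) ≤ ENNReal.ofReal t * Ψ x + ENNReal.ofReal (1 - t) * Ψ y
  lsc : LowerSemicontinuous Ψ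
  eq_top_of_neg : ∀ x : ℝ, x < 0 → Ψ x = ∞
  one_eq_zero : Ψ 1 = 0
  superlinear : Tendsto (fun t : ℝ => Ψ t / ENNReal.ofReal t) atTop (𝓝 ∞)

/-- The Csiszár divergence `D_Ψ(ρ|σ) = ∫ Ψ(dρ/dσ) dσ` if `ρ ≪ σ`, and `∞` otherwise. -/
def csiszar {Z : Type*} [MeasurableSpace Z] (Ψ : ℝ → ℝ≥0∞) (ρ σ : Measure Z) : ℝ≥0∞ :=
  if ρ ≪ σ then ∫⁻ z, Ψ ((ρ.rnDeriv σ z).toReal) ∂σ else ∞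

/-- The objective of the `α`-scaled unbalanced optimal transport problem:
`∫ c dπ + α D_{Ψ₁}(π₀|μ) + α D_{Ψ₂}(π₁|ν)`. -/
def uotObj {d : ℕ} (τ α : ℝ) (Ψ₁ Ψ₂ : ℝ → ℝ≥0∞)
    (μ ν : Measure (EuclideanSpace ℝ (Fin d)))
    (π : Measure (EuclideanSpace ℝ (Fin d) × EuclideanSpace ℝ (Fin d))) : ℝ≥0∞ :=
  (∫⁻ z, ENNReal.ofReal (cost τ z.1 z.2) ∂π)
    + ENNReal.ofReal α * csiszar Ψ₁ (π.map Prod.fst) μ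
    + ENNReal.ofReal α * csiszar Ψ₂ (π.map Prod.snd) ν

/-- The `α`-scaled unbalanced optimal transport cost `C_ub^α(μ,ν)`, the infimum of the
objective over finite positive Borel measures `π` supported on `X × Y`. -/
def UOTcost {d : ℕ} (τ α : ℝ) (Ψ₁ Ψ₂ : ℝ → ℝ≥0∞) (X Y : Set (EuclideanSpace ℝ (Fin d)))
    (μ ν : Measure (EuclideanSpace ℝ (Fin d))) : ℝ≥0∞ :=
  ⨅ (π : Measure (EuclideanSpace ℝ (Fin d) × EuclideanSpace ℝ (Fin d)))
    (_ : IsFiniteMeasure π) (_ : π ((X ×ˢ Y)ᶜ) = 0), uotObj τ α Ψ₁ Ψ₂ μ ν π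

/-- The optimal transport cost `C(μ,ν) = inf_{π ∈ Π(μ,ν)} ∫ c dπ`. -/
def OTcost {d : ℕ} (τ : ℝ) (μ ν : Measure (EuclideanSpace ℝ (Fin d))) : ℝ≥0∞ :=
  ⨅ (π : Measure (EuclideanSpace ℝ (Fin d) × EuclideanSpace ℝ (Fin d)))
    (_ : π.map Prod.fst = μ ∧ π.map Prod.snd = ν),
    ∫⁻ z, ENNReal.ofReal (cost τ z.1 z.2) ∂π


lemma csiszar_self {Z : Type*} [MeasurableSpace Z] {Ψ : ℝ → ℝ≥0∞} (hΨ : Ψ 1 = 0)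
    (μ : Measure Z) [SigmaFinite μ] : csiszar Ψ μ μ = 0 := by
  rw [csiszar, if_pos (Measure.AbsolutelyContinuous.refl μ)]
  calc ∫⁻ z, Ψ ((μ.rnDeriv μ z).toReal) ∂μ = ∫⁻ _, 0 ∂μ := by
        apply lintegral_congr_ae
        filter_upwards [Measure.rnDeriv_self μ] with z hz
        rw [hz]; simpa using hΨ
    _ = 0 := lintegral_zero

/-- If `π^α` attains `C_ub^α(μ,ν)`, then its marginal discrepancies
satisfy `D_Ψ₁(π₀^α|μ) + D_Ψ₂(π₁^α|ν) ≤ C(μ,ν)/α`. -/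
theorem uot_minimizer_marginal_bound
    {d : ℕ} (τ : ℝ) (hτ : 0 < τ)
    (X Y : Set (EuclideanSpace ℝ (Fin d))) (hX : IsCompact X) (hY : IsCompact Y)
    (μ ν : Measure (EuclideanSpace ℝ (Fin d)))
    [IsProbabilityMeasure μ] [IsProbabilityMeasure ν]
    (hμX : μ Xᶜ = 0) (hνY : ν Yᶜ = 0)
    (Ψ₁ Ψ₂ : ℝ → ℝ≥0∞) (hΨ₁ : IsEntropy Ψ₁) (hΨ₂ : IsEntropy Ψ₂)
    (α : ℝ) (hα : 0 < α)
    (π : Measure (EuclideanSpace ℝ (Fin d) × EuclideanSpace ℝ (Fin d))) (hπfin : IsFiniteMeasure π)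
    (hπsupp : π ((X ×ˢ Y)ᶜ) = 0)
    (hπmin : uotObj τ α Ψ₁ Ψ₂ μ ν π = UOTcost τ α Ψ₁ Ψ₂ X Y μ ν) :
    csiszar Ψ₁ (π.map Prod.fst) μ + csiszar Ψ₂ (π.map Prod.snd) ν
      ≤ OTcost τ μ ν / ENNReal.ofReal α := by
  have hα0 : ENNReal.ofReal α ≠ 0 := by simp [ENNReal.ofReal_eq_zero, not_le, hα]
  have hαt : ENNReal.ofReal α ≠ ∞ := ENNReal.ofReal_ne_top
  rw [ENNReal.le_div_iff_mul_le (Or.inl hα0) (Or.inl hαt)]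
  rw [OTcost, le_iInf_iff]
  intro π'
  rw [le_iInf_iff]
  rintro ⟨h1, h2⟩
  -- π' is a probability measure, hence finite
  have hπ'fin : IsFiniteMeasure π' := by
    constructor
    have : π'.map Prod.fst Set.univ = μ Set.univ := by rw [h1]
    rw [Measure.map_apply measurable_fst MeasurableSet.univ] at this
    simp only [Set.preimage_univ] at this
    rw [this]
    exact measure_lt_top μ _
  -- π' is supported on X × Y
  have hπ'supp : π' ((X ×ˢ Y)ᶜ) = 0 := by
    have hsub : (X ×ˢ Y)ᶜ ⊆ (Prod.fst ⁻¹' Xᶜ) ∪ (Prod.snd ⁻¹' Yᶜ) := by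
      intro z hz
      simp only [Set.mem_compl_iff, Set.mem_prod, not_and_or] at hz
      rcases hz with h | h
      · exact Or.inl h
      · exact Or.inr h
    refine le_antisymm ?_ zero_le
    calc π' ((X ×ˢ Y)ᶜ) ≤ π' (Prod.fst ⁻¹' Xᶜ) + π' (Prod.snd ⁻¹' Yᶜ) :=
          (measure_mono hsub).trans (measure_union_le _ _)
      _ = μ Xᶜ + ν Yᶜ := by
          rw [← Measure.map_apply measurable_fst hX.isClosed.measurableSet.compl,
            ← Measure.map_apply measurable_snd hY.isClosed.measurableSet.compl, h1, h2]
      _ = 0 := by rw [hμX, hνY, add_zero]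
  -- the objective at π' is just the transport cost
  have hobj : uotObj τ α Ψ₁ Ψ₂ μ ν π' = ∫⁻ z, ENNReal.ofReal (cost τ z.1 z.2) ∂π' := by
    rw [uotObj, h1, h2, csiszar_self hΨ₁.one_eq_zero, csiszar_self hΨ₂.one_eq_zero]
    simp
  calc (csiszar Ψ₁ (π.map Prod.fst) μ + csiszar Ψ₂ (π.map Prod.snd) ν) * ENNReal.ofReal α
      = ENNReal.ofReal α * csiszar Ψ₁ (π.map Prod.fst) μ
        + ENNReal.ofReal α * csiszar Ψ₂ (π.map Prod.snd) ν := by ring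
    _ ≤ uotObj τ α Ψ₁ Ψ₂ μ ν π := by
        rw [uotObj, add_assoc]; exact le_add_self
    _ = UOTcost τ α Ψ₁ Ψ₂ X Y μ ν := hπmin
    _ ≤ uotObj τ α Ψ₁ Ψ₂ μ ν π' := by
        refine iInf_le_of_le π' ?_
        exact iInf_le_of_le hπ'fin (iInf_le_of_le hπ'supp le_rfl)
    _ = ∫⁻ z, ENNReal.ofReal (cost τ z.1 z.2) ∂π' := hobj

end
end
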